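/- arXiv:2108.10238 — 7 statements merged into one kernel-verified Lean document; each statement's English description precedes it below -/
import Mathlib

section
/- The function x ↦ sin(x)/x (extended by 1 at x = 0) attains a global minimum on ℝ \ {0}, and its minimum value c₀ := min_{x ≠ 0} sin(x)/x satisfies -0.2173 < c₀ < -0.2172. -/
open Real

private lemma ladder {f g f' g' : ℝ → ℝ}
    (hf : ∀ t, HasDerivAt f (f' t) t) (hg : ∀ t, HasDerivAt g (g' t) t)
    (h0 : f 0 ≤ g 0) (hd : ∀ t, 0 ≤ t → f' t ≤ g' t) {x : ℝ} (hx : 0 ≤ x) :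
    f x ≤ g x := by
  have hD : ∀ t, HasDerivAt (fun s => g s - f s) (g' t - f' t) t := fun t => (hg t).sub (hf t)
  have hmono : MonotoneOn (fun s => g s - f s) (Set.Ici 0) := by
    apply monotoneOn_of_deriv_nonneg (convex_Ici 0)
    · exact fun t _ => ((hD t).differentiableAt.continuousAt).continuousWithinAt
    · exact fun t _ => ((hD t).differentiableAt).differentiableWithinAt
    · intro t ht
      rw [(hD t).deriv]
      have ht' : (0:ℝ) ≤ t := by
        have : t ∈ Set.Ioi (0:ℝ) := by simpa [interior_Ici] using ht
        exact le_of_lt this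
      linarith [hd t ht']
  have h := hmono Set.self_mem_Ici (Set.mem_Ici.2 hx) hx
  simp only at h
  linarith

private lemma cos_ge2 {x : ℝ} (hx : 0 ≤ x) : 1 - x^2/2 ≤ Real.cos x := by
  refine ladder (fun t => ((hasDerivAt_pow 2 t).div_const 2).const_sub 1)
    (fun t => Real.hasDerivAt_cos t) (by norm_num) ?_ hx
  intro t ht
  have := Real.sin_le ht
  push_cast
  nlinarith

private lemma sin_ge3 {x : ℝ} (hx : 0 ≤ x) : x^1 - x^3/6 ≤ Real.sin x := by
  refine ladder
    (fun t => (hasDerivAt_pow 1 t).sub ((hasDerivAt_pow 3 t).div_const 6))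
    (fun t => Real.hasDerivAt_sin t) (by norm_num) ?_ hx
  intro t ht
  have := cos_ge2 ht
  push_cast
  nlinarith

private lemma cos_le4 {x : ℝ} (hx : 0 ≤ x) : Real.cos x ≤ 1 - x^2/2 + x^4/24 := by
  refine ladder (fun t => Real.hasDerivAt_cos t)
    (fun t => (((hasDerivAt_pow 2 t).div_const 2).const_sub 1).add
      ((hasDerivAt_pow 4 t).div_const 24)) (by norm_num) ?_ hx
  intro t ht
  have := sin_ge3 ht
  push_cast
  nlinarith

private lemma sin_le5 {x : ℝ} (hx : 0 ≤ x) : Real.sin x ≤ x^1 - x^3/6 + x^5/120 := by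
  refine ladder (fun t => Real.hasDerivAt_sin t)
    (fun t => ((hasDerivAt_pow 1 t).sub ((hasDerivAt_pow 3 t).div_const 6)).add
      ((hasDerivAt_pow 5 t).div_const 120)) (by norm_num) ?_ hx
  intro t ht
  have := cos_le4 ht
  push_cast
  nlinarith

private lemma cos_ge6 {x : ℝ} (hx : 0 ≤ x) : 1 - x^2/2 + x^4/24 - x^6/720 ≤ Real.cos x := by
  refine ladder
    (fun t => ((((hasDerivAt_pow 2 t).div_const 2).const_sub 1).add
      ((hasDerivAt_pow 4 t).div_const 24)).sub ((hasDerivAt_pow 6 t).div_const 720))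
    (fun t => Real.hasDerivAt_cos t) (by norm_num) ?_ hx
  intro t ht
  have := sin_le5 ht
  push_cast
  nlinarith

private lemma sin_ge7 {x : ℝ} (hx : 0 ≤ x) :
    x^1 - x^3/6 + x^5/120 - x^7/5040 ≤ Real.sin x := by
  refine ladder
    (fun t => (((hasDerivAt_pow 1 t).sub ((hasDerivAt_pow 3 t).div_const 6)).add
      ((hasDerivAt_pow 5 t).div_const 120)).sub ((hasDerivAt_pow 7 t).div_const 5040))
    (fun t => Real.hasDerivAt_sin t) (by norm_num) ?_ hx
  intro t ht
  have := cos_ge6 ht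
  push_cast
  nlinarith

private lemma cos_le8 {x : ℝ} (hx : 0 ≤ x) :
    Real.cos x ≤ 1 - x^2/2 + x^4/24 - x^6/720 + x^8/40320 := by
  refine ladder (fun t => Real.hasDerivAt_cos t)
    (fun t => (((((hasDerivAt_pow 2 t).div_const 2).const_sub 1).add
      ((hasDerivAt_pow 4 t).div_const 24)).sub ((hasDerivAt_pow 6 t).div_const 720)).add
      ((hasDerivAt_pow 8 t).div_const 40320)) (by norm_num) ?_ hx
  intro t ht
  have := sin_ge7 ht
  push_cast
  nlinarith

private lemma sin_le9 {x : ℝ} (hx : 0 ≤ x) :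
    Real.sin x ≤ x^1 - x^3/6 + x^5/120 - x^7/5040 + x^9/362880 := by
  refine ladder (fun t => Real.hasDerivAt_sin t)
    (fun t => ((((hasDerivAt_pow 1 t).sub ((hasDerivAt_pow 3 t).div_const 6)).add
      ((hasDerivAt_pow 5 t).div_const 120)).sub ((hasDerivAt_pow 7 t).div_const 5040)).add
      ((hasDerivAt_pow 9 t).div_const 362880)) (by norm_num) ?_ hx
  intro t ht
  have := cos_le8 ht
  push_cast
  nlinarith

private lemma cos_ge10 {x : ℝ} (hx : 0 ≤ x) :
    1 - x^2/2 + x^4/24 - x^6/720 + x^8/40320 - x^10/3628800 ≤ Real.cos x := by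
  refine ladder
    (fun t => ((((((hasDerivAt_pow 2 t).div_const 2).const_sub 1).add
      ((hasDerivAt_pow 4 t).div_const 24)).sub ((hasDerivAt_pow 6 t).div_const 720)).add
      ((hasDerivAt_pow 8 t).div_const 40320)).sub ((hasDerivAt_pow 10 t).div_const 3628800))
    (fun t => Real.hasDerivAt_cos t) (by norm_num) ?_ hx
  intro t ht
  have := sin_le9 ht
  push_cast
  nlinarith

/-- tangent line bound for sin on [0, π] -/
private lemma sin_tangent {A u : ℝ} (hA : A ∈ Set.Icc 0 π) (hu : u ∈ Set.Icc 0 π) :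
    Real.sin u ≤ Real.sin A + Real.cos A * (u - A) := by
  rcases lt_trichotomy u A with h | h | h
  · obtain ⟨c, hc, hceq⟩ := exists_hasDerivAt_eq_slope Real.sin Real.cos h
      Real.continuous_sin.continuousOn (fun t _ => Real.hasDerivAt_sin t)
    have hcA : Real.cos A < Real.cos c :=
      Real.strictAntiOn_cos ⟨le_trans hu.1 hc.1.le, le_trans hc.2.le hA.2⟩ hA hc.2
    have heq : Real.cos c * (A - u) = Real.sin A - Real.sin u :=
      (eq_div_iff (sub_ne_zero.2 h.ne')).1 hceq
    nlinarith
  · simp [h]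
  · obtain ⟨c, hc, hceq⟩ := exists_hasDerivAt_eq_slope Real.sin Real.cos h
      Real.continuous_sin.continuousOn (fun t _ => Real.hasDerivAt_sin t)
    have hcA : Real.cos c < Real.cos A :=
      Real.strictAntiOn_cos hA ⟨le_trans hA.1 hc.1.le, le_trans hc.2.le hu.2⟩ hc.1
    have heq : Real.cos c * (u - A) = Real.sin u - Real.sin A :=
      (eq_div_iff (sub_ne_zero.2 h.ne')).1 hceq
    nlinarith

private lemma sinA_lb : (0.976053 : ℝ) ≤ Real.sin 1.3517 := by
  have h := sin_ge7 (x := 1.3517) (by norm_num)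
  norm_num at h ⊢
  linarith

private lemma sinA_ub : Real.sin 1.3517 ≤ (0.976095 : ℝ) := by
  have h := sin_le9 (x := 1.3517) (by norm_num)
  norm_num at h ⊢
  linarith

private lemma cosA_lb : (0.217347 : ℝ) ≤ Real.cos 1.3517 := by
  have h := cos_ge10 (x := 1.3517) (by norm_num)
  norm_num at h ⊢
  linarith

private lemma cosA_ub : Real.cos 1.3517 ≤ (0.217354 : ℝ) := by
  have h := cos_le8 (x := 1.3517) (by norm_num)
  norm_num at h ⊢
  linarith

/-- global lower bound : sin t > -0.2173 t for t > 0 -/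
private lemma key_lower {t : ℝ} (ht : 0 < t) : (-0.2173) * t < Real.sin t := by
  rcases le_or_gt t π with h1 | h1
  · have h0 := Real.sin_nonneg_of_nonneg_of_le_pi ht.le h1
    nlinarith
  rcases le_or_gt t 4.61 with h2 | h2
  swap
  · have := Real.neg_one_le_sin t
    nlinarith
  · -- π < t ≤ 4.61
    set u : ℝ := t - π with hu
    have hpiL := Real.pi_gt_d6
    have hpiU := Real.pi_lt_d6
    have hu0 : 0 < u := by simp [hu]; linarith
    have huM : u ≤ 1.46841 := by simp [hu]; linarith
    have hst : Real.sin t = -Real.sin u := by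
      rw [show t = u + π by simp [hu], Real.sin_add_pi]
    have htan : Real.sin u ≤ Real.sin 1.3517 + Real.cos 1.3517 * (u - 1.3517) :=
      sin_tangent ⟨by norm_num, by linarith⟩ ⟨hu0.le, by linarith⟩
    rw [hst]
    have hsU := sinA_ub
    have hcL := cosA_lb
    have hcU := cosA_ub
    -- want : -0.2173 * t < -sin u, i.e. sin u < 0.2173 * (u + π)
    have hgoal : Real.sin u < 0.2173 * (u + π) := by
      rcases le_or_gt (Real.cos 1.3517) 0.2173 with hcase | hcase
      · nlinarith [mul_nonneg (sub_nonneg.2 hcase) hu0.le]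
      · nlinarith [mul_nonneg (sub_nonneg.2 hcase.le) (sub_nonneg.2 huM)]
    have : t = u + π := by simp [hu]
    rw [this]
    linarith
  
/-- The function `x ↦ sin x / x` attains a global minimum on `ℝ \ {0}`, and the minimum
value `c₀` satisfies `-0.2173 < c₀ < -0.2172`. -/
theorem stmt_2 :
    ∃ x : ℝ, x ≠ 0 ∧ (∀ y : ℝ, y ≠ 0 → Real.sin x / x ≤ Real.sin y / y) ∧
      -0.2173 < Real.sin x / x ∧ Real.sin x / x < -0.2172 := by
  have hpiL := Real.pi_gt_d6
  have hpiU := Real.pi_lt_d6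
  have hcont : ContinuousOn (fun y : ℝ => Real.sin y / y) (Set.Icc 4 5) := by
    apply ContinuousOn.div Real.continuous_sin.continuousOn continuousOn_id
    intro y hy h
    simp only [id_eq] at h
    rw [h] at hy
    exact absurd hy.1 (by norm_num)
  obtain ⟨x, hxK, hmin⟩ := isCompact_Icc.exists_isMinOn
    (Set.nonempty_Icc.2 (by norm_num)) hcont
  have hmin' : ∀ y ∈ Set.Icc (4:ℝ) 5, Real.sin x / x ≤ Real.sin y / y := isMinOn_iff.1 hmin
  have hx4 : (4:ℝ) ≤ x := hxK.1
  have hx0 : (0:ℝ) < x := by linarith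
  -- the sample point p = 1.3517 + π
  set p : ℝ := 1.3517 + π with hp
  have hpK : p ∈ Set.Icc (4:ℝ) 5 := ⟨by simp [hp]; linarith, by simp [hp]; linarith⟩
  have hsp : Real.sin p = -Real.sin 1.3517 := by rw [hp, Real.sin_add_pi]
  have hub : Real.sin x / x < -0.2172 := by
    refine lt_of_le_of_lt (hmin' p hpK) ?_
    rw [hsp, div_lt_iff₀ (by simp [hp]; linarith)]
    have := sinA_lb
    nlinarith
  have main_pos : ∀ y : ℝ, 0 < y → Real.sin x / x ≤ Real.sin y / y := by
    intro y hy
    rcases le_or_gt y π with h1 | h1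
    · have h0 : 0 ≤ Real.sin y / y :=
        div_nonneg (Real.sin_nonneg_of_nonneg_of_le_pi hy.le h1) hy.le
      nlinarith
    rcases lt_or_ge y 4 with h2 | h2
    · have hsin : -(y - π) ≤ Real.sin y := by
        rw [show y = (y - π) + π by ring, Real.sin_add_pi]
        have := Real.sin_le (show (0:ℝ) ≤ y - π by linarith)
        linarith
      have hlow : (-0.2172 : ℝ) ≤ Real.sin y / y := by
        rw [le_div_iff₀ hy]
        nlinarith
      linarith
    rcases le_or_gt y 5 with h3 | h3
    · exact hmin' y ⟨h2, h3⟩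
    · have hlow : (-0.2172 : ℝ) ≤ Real.sin y / y := by
        rw [le_div_iff₀ hy]
        nlinarith [Real.neg_one_le_sin y]
      linarith
  refine ⟨x, by positivity, ?_, ?_, hub⟩
  · intro y hy
    rcases lt_or_gt_of_ne hy with h | h
    · have := main_pos (-y) (by linarith)
      rwa [Real.sin_neg, neg_div_neg_eq] at this
    · exact main_pos y h
  · have := key_lower hx0
    rw [lt_div_iff₀ hx0]
    nlinarith
end

section
/- For every positive integer n and every real x, the Dirichlet kernel D_n(x) = ∑_{k=-n}^{n} e^{ikx} is real-valued and satisfies D_n(x) ≥ 2n·c₀ - C for some absolute constant C, where c₀ = min_{t ≠ 0} sin(t)/t. More precisely, letting m(n) := min_{x ∈ ℝ} D_n(x), one has |m(n)/n - 2c₀| ≪ 1/n, so in particular lim_{n→∞} m(n)/n = 2c₀. -/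
open Real Filter Topology

/-- The Dirichlet kernel `D_n(x) = ∑_{k=-n}^{n} e^{ikx}`. -/
noncomputable def dirichletKer (n : ℕ) (x : ℝ) : ℂ :=
  ∑ k ∈ Finset.Icc (-(n : ℤ)) (n : ℤ), Complex.exp ((k : ℂ) * (x : ℂ) * Complex.I)

/-- `m(n) = min_x D_n(x)`. -/
noncomputable def dirichletMin (n : ℕ) : ℝ :=
  sInf (Set.range fun x : ℝ => (dirichletKer n x).re)

lemma dk_re (n : ℕ) (x : ℝ) :
    (dirichletKer n x).re = ∑ k ∈ Finset.Icc (-(n : ℤ)) (n : ℤ), Real.cos (k * x) := by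
  rw [dirichletKer, Complex.re_sum]
  refine Finset.sum_congr rfl fun k _ => ?_
  rw [show ((k : ℂ) * (x : ℂ)) = (((k : ℝ) * x : ℝ) : ℂ) by push_cast; ring,
    Complex.exp_ofReal_mul_I_re]

lemma dk_im (n : ℕ) (x : ℝ) : (dirichletKer n x).im = 0 := by
  rw [dirichletKer, Complex.im_sum]
  have h : ∀ k : ℤ, (Complex.exp ((k : ℂ) * (x : ℂ) * Complex.I)).im = Real.sin (k * x) := by
    intro k
    rw [show ((k : ℂ) * (x : ℂ)) = (((k : ℝ) * x : ℝ) : ℂ) by push_cast; ring,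
      Complex.exp_ofReal_mul_I_im]
  simp only [h]
  have key : ∑ k ∈ Finset.Icc (-(n : ℤ)) (n : ℤ), Real.sin (k * x)
      = ∑ k ∈ Finset.Icc (-(n : ℤ)) (n : ℤ), -Real.sin (k * x) := by
    refine Finset.sum_equiv (Equiv.neg ℤ) (fun i => by simp [Finset.mem_Icc]; omega)
      (fun i _ => ?_)
    simp [Real.sin_neg]
  have := key
  rw [Finset.sum_neg_distrib] at this
  linarith

lemma Icc_split (n : ℕ) :
    Finset.Icc (-(n + 1 : ℤ)) ((n : ℤ) + 1)
      = insert (-(n + 1 : ℤ)) (insert ((n : ℤ) + 1) (Finset.Icc (-(n : ℤ)) (n : ℤ))) := by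
  ext m; simp only [Finset.mem_Icc, Finset.mem_insert]; omega

lemma dk_key (n : ℕ) (x : ℝ) :
    Real.sin (x / 2) * (dirichletKer n x).re = Real.sin (((n : ℝ) + 1 / 2) * x) := by
  induction n with
  | zero => simp [dk_re]; norm_num [mul_comm, div_eq_inv_mul]
  | succ n ih =>
    rw [dk_re] at ih ⊢
    push_cast
    rw [Icc_split, Finset.sum_insert (by simp [Finset.mem_Icc]; omega),
      Finset.sum_insert (by simp [Finset.mem_Icc])]
    push_cast
    have e1 : Real.sin (((n : ℝ) + 1 + 1 / 2) * x) - Real.sin (((n : ℝ) + 1 / 2) * x)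
        = 2 * Real.sin (x / 2) * Real.cos (((n : ℝ) + 1) * x) := by
      rw [Real.sin_sub_sin]; ring_nf
    have e2 : Real.cos (-((n : ℝ) + 1) * x) = Real.cos (((n : ℝ) + 1) * x) := by
      rw [show (-((n : ℝ) + 1) * x) = -(((n : ℝ) + 1) * x) by ring, Real.cos_neg]
    rw [e2]
    nlinarith [ih]

lemma dk_re_eq {n : ℕ} {x : ℝ} (hs : Real.sin (x / 2) ≠ 0) :
    (dirichletKer n x).re = Real.sin (((n : ℝ) + 1 / 2) * x) / Real.sin (x / 2) := by
  rw [eq_div_iff hs, mul_comm, dk_key]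

lemma dk_reduce (n : ℕ) (x : ℝ) :
    ∃ y : ℝ, 0 ≤ y ∧ y ≤ π ∧ (dirichletKer n x).re = (dirichletKer n y).re := by
  set m : ℤ := round (x / (2 * π)) with hm
  set z : ℝ := x - m * (2 * π) with hz
  have hzb : |z| ≤ π := by
    have h1 : |x / (2 * π) - m| ≤ 1 / 2 := abs_sub_round _
    have h2 : (0:ℝ) < 2 * π := by positivity
    have hz2 : z = (x / (2 * π) - m) * (2 * π) := by
      rw [hz]; field_simp
    rw [hz2, abs_mul, abs_of_pos h2]
    have := mul_le_mul_of_nonneg_right h1 (le_of_lt h2)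
    linarith
  refine ⟨|z|, abs_nonneg _, hzb, ?_⟩
  rw [dk_re, dk_re]
  refine Finset.sum_congr rfl fun k _ => ?_
  have h1 : Real.cos ((k : ℝ) * x) = Real.cos ((k : ℝ) * z) := by
    have : (k : ℝ) * x = (k : ℝ) * z + (k * m : ℤ) * (2 * π) := by
      push_cast; rw [hz]; ring
    rw [this, Real.cos_add_int_mul_two_pi]
  rcases abs_cases z with ⟨h, _⟩ | ⟨h, _⟩
  · rw [h1, h]
  · rw [h1, h, show (k:ℝ) * -z = -((k:ℝ)*z) by ring, Real.cos_neg]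

set_option maxHeartbeats 1000000 in
lemma dk_lower {c₀ : ℝ} (hmin : ∀ t : ℝ, t ≠ 0 → c₀ ≤ Real.sin t / t)
    (hc1 : c₀ ≤ 0) (hc0 : -1 ≤ c₀) (n : ℕ) (x : ℝ) :
    2 * (n : ℝ) * c₀ - 5 ≤ (dirichletKer n x).re := by
  obtain ⟨y, hy0, hyπ, hxy⟩ := dk_reduce n x
  rw [hxy]
  rcases eq_or_lt_of_le hy0 with h0 | h0
  · rw [dk_re]
    simp only [← h0, mul_zero, Real.cos_zero, Finset.sum_const, nsmul_eq_mul, mul_one]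
    have : (Finset.Icc (-(n : ℤ)) (n : ℤ)).card = 2 * n + 1 := by
      rw [Int.card_Icc]; omega
    rw [this]
    have : (0:ℝ) ≤ 2 * n + 1 := by positivity
    push_cast
    nlinarith [Nat.cast_nonneg (α := ℝ) n]
  · set N : ℝ := (n : ℝ) + 1 / 2 with hN
    have hNpos : 0 < N := by positivity
    have hy2 : y / 2 < π := by linarith [Real.pi_pos]
    have hsin : 0 < Real.sin (y / 2) := Real.sin_pos_of_pos_of_lt_pi (by linarith) hy2
    set s : ℝ := Real.sin (y / 2) with hs
    set S : ℝ := Real.sin (N * y) with hS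
    have hre : (dirichletKer n y).re = S / s := dk_re_eq (ne_of_gt hsin)
    have hsy : s ≤ y / 2 := Real.sin_le (by linarith)
    have hS1 : -1 ≤ S := Real.neg_one_le_sin _
    have hS2 : S ≤ 1 := Real.sin_le_one _
    have h1 : c₀ * (N * y) ≤ S := by
      have := hmin (N * y) (by positivity)
      rw [le_div_iff₀ (by positivity)] at this
      linarith
    clear_value N s S
    have hE0 : 0 ≤ 1 / s - 2 / y := by
      rw [sub_nonneg, show (2:ℝ)/y = 1/(y/2) by ring]
      exact one_div_le_one_div_of_le hsin hsy
    have hE : 1 / s - 2 / y ≤ 4 := by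
      rcases le_or_gt y 1 with hy1 | hy1
      · have hc := Real.sin_gt_sub_cube (x := y / 2) (by linarith)
        have hq1 : 0 ≤ y * (1 - y) := mul_nonneg (le_of_lt h0) (by linarith)
        have hq2 : 0 ≤ y * y * (1 - y) := mul_nonneg (mul_nonneg (le_of_lt h0) (le_of_lt h0)) (by linarith)
        have hy3 : y ^ 3 ≤ y := by nlinarith [hq1, hq2]
        have hy3' : y ^ 3 ≤ y ^ 2 := by nlinarith
        have h15 : (15 / 32) * y ≤ s := by nlinarith
        have heq : 1 / s - 2 / y = (y - 2 * s) / (s * y) := by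
          field_simp
        rw [heq, div_le_iff₀ (by positivity)]
        nlinarith [mul_le_mul_of_nonneg_right h15 (le_of_lt h0)]
      · have hsl : y / π ≤ s := by
          have := Real.mul_le_sin (x := y / 2) (by linarith) (by linarith)
          rw [← hs] at this
          calc y / π = 2 / π * (y / 2) := by ring
            _ ≤ s := this
        have hsl' : y ≤ s * π := (div_le_iff₀ Real.pi_pos).mp hsl
        have : 1 / s ≤ π / y := by
          rw [div_le_div_iff₀ hsin h0]
          linarith
        have hpy : π / y ≤ π := by
          rw [div_le_iff₀ h0]; nlinarith [Real.pi_pos]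
        have : 1 / s ≤ 4 := le_trans this (le_trans hpy Real.pi_le_four)
        have h2y : 0 < 2 / y := by positivity
        linarith
    rw [hre]
    have key : S / s = 2 * S / y + S * (1 / s - 2 / y) := by
      ring
    rw [key]
    have h2S : 2 * N * c₀ ≤ 2 * S / y := by
      rw [le_div_iff₀ h0]
      linarith
    have h3 : -(1 / s - 2 / y) ≤ S * (1 / s - 2 / y) := by
      nlinarith [mul_nonneg (by linarith : (0:ℝ) ≤ S + 1) hE0]
    have : 2 * N * c₀ = 2 * n * c₀ + c₀ := by rw [hN]; ring
    linarith

/-- The Dirichlet kernel is real-valued, bounded below by `2n·c₀ - C` for an absolute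
constant `C`, and `|m(n)/n - 2c₀| ≪ 1/n`, so in particular `m(n)/n → 2c₀`,
where `c₀ = min_{t ≠ 0} sin t / t`. -/
theorem stmt_3 (c₀ : ℝ)
    (hmin : ∀ t : ℝ, t ≠ 0 → c₀ ≤ Real.sin t / t)
    (hatt : ∃ t : ℝ, t ≠ 0 ∧ Real.sin t / t = c₀) :
    (∀ (n : ℕ) (x : ℝ), (dirichletKer n x).im = 0) ∧
    (∃ C : ℝ, ∀ (n : ℕ), 1 ≤ n → ∀ x : ℝ,
      2 * (n : ℝ) * c₀ - C ≤ (dirichletKer n x).re) ∧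
    (∃ C : ℝ, ∀ (n : ℕ), 1 ≤ n →
      |dirichletMin n / (n : ℝ) - 2 * c₀| ≤ C / (n : ℝ)) ∧
    Tendsto (fun n : ℕ => dirichletMin n / (n : ℝ)) atTop (𝓝 (2 * c₀)) := by
  -- basic facts about c₀
  have hc1 : c₀ ≤ 0 := by
    have := hmin π Real.pi_ne_zero
    simpa [Real.sin_pi] using this
  have hc0 : -1 ≤ c₀ := by
    obtain ⟨t, ht, heq⟩ := hatt
    rw [← heq]
    have h2 : 0 < |t| := abs_pos.mpr ht
    have habs : |Real.sin t / t| ≤ 1 := by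
      rw [abs_div, div_le_one h2]; exact Real.abs_sin_le_abs
    exact (abs_le.mp habs).1
  -- a positive point where sinc attains c₀
  obtain ⟨t, ht, heq⟩ := hatt
  set t₀ : ℝ := |t| with ht₀
  have ht₀pos : 0 < t₀ := abs_pos.mpr ht
  have hatt₀ : Real.sin t₀ / t₀ = c₀ := by
    rcases abs_cases t with ⟨h, _⟩ | ⟨h, _⟩
    · rw [ht₀, h]; exact heq
    · rw [ht₀, h, Real.sin_neg, neg_div_neg_eq]; exact heq
  set n₀ : ℕ := ⌈t₀⌉₊ with hn₀
  have hn₀t : t₀ ≤ n₀ := Nat.le_ceil t₀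
  -- lower bound for dirichletMin
  have hlow : ∀ n : ℕ, ∀ x : ℝ, 2 * (n : ℝ) * c₀ - 5 ≤ (dirichletKer n x).re :=
    fun n x => dk_lower hmin hc1 hc0 n x
  have hbdd : ∀ n : ℕ, BddBelow (Set.range fun x : ℝ => (dirichletKer n x).re) := by
    intro n
    exact ⟨2 * (n : ℝ) * c₀ - 5, by rintro b ⟨x, rfl⟩; exact hlow n x⟩
  have hmlow : ∀ n : ℕ, 2 * (n : ℝ) * c₀ - 5 ≤ dirichletMin n := by
    intro n
    rw [dirichletMin]
    exact le_csInf ⟨(dirichletKer n 0).re, 0, rfl⟩ (by rintro b ⟨x, rfl⟩; exact hlow n x)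
  -- upper bound at π : m(n) ≤ 1
  have hmpi : ∀ n : ℕ, dirichletMin n ≤ 1 := by
    intro n
    have h1 : (dirichletKer n π).re ≤ 1 := by
      have hs : Real.sin (π / 2) ≠ 0 := by rw [Real.sin_pi_div_two]; norm_num
      rw [dk_re_eq hs, Real.sin_pi_div_two, div_one]
      exact Real.sin_le_one _
    rw [dirichletMin]
    exact le_trans (csInf_le (hbdd n) ⟨π, rfl⟩) h1
  -- upper bound for large n : m(n) ≤ 2 n c₀
  have hmup : ∀ n : ℕ, n₀ ≤ n → 1 ≤ n → dirichletMin n ≤ 2 * (n : ℝ) * c₀ := by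
    intro n hn hn1
    set N : ℝ := (n : ℝ) + 1 / 2 with hN
    have hNpos : (0:ℝ) < N := by positivity
    have htN : t₀ < N := by
      have h2 : (n₀ : ℝ) ≤ (n : ℝ) := by exact_mod_cast hn
      rw [hN]
      linarith [hn₀t, h2]
    set x : ℝ := t₀ / N with hx
    have hx0 : 0 < x := by positivity
    have hx1 : x < 1 := by
      rw [hx, div_lt_one hNpos]
      have hN1 : (1:ℝ) ≤ (n:ℝ) := by exact_mod_cast hn1
      linarith [htN]
    have hNx : N * x = t₀ := by
      rw [hx]; field_simp
    have hsin : 0 < Real.sin (x / 2) := by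
      apply Real.sin_pos_of_pos_of_lt_pi (by linarith)
      linarith [Real.pi_gt_three]
    have hsle : Real.sin (x / 2) ≤ x / 2 := Real.sin_le (by linarith)
    have hst : Real.sin t₀ = c₀ * t₀ := by
      field_simp at hatt₀
      linarith [hatt₀]
    have h1 : (dirichletKer n x).re = Real.sin t₀ / Real.sin (x / 2) := by
      rw [dk_re_eq (ne_of_gt hsin), ← hN, hNx]
    have h2 : Real.sin t₀ / Real.sin (x / 2) ≤ Real.sin t₀ / (x / 2) := by
      rw [div_le_div_iff₀ hsin (by linarith)]
      have hs0 : Real.sin t₀ ≤ 0 := by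
        rw [hst]; exact mul_nonpos_of_nonpos_of_nonneg hc1 (le_of_lt ht₀pos)
      nlinarith
    have h3 : Real.sin t₀ / (x / 2) = 2 * N * c₀ := by
      rw [hst, hx]
      field_simp
    have h4 : (dirichletKer n x).re ≤ 2 * (n : ℝ) * c₀ := by
      rw [h1]
      calc Real.sin t₀ / Real.sin (x / 2) ≤ Real.sin t₀ / (x / 2) := h2
        _ = 2 * N * c₀ := h3
        _ = 2 * (n : ℝ) * c₀ + c₀ := by rw [hN]; ring
        _ ≤ 2 * (n : ℝ) * c₀ := by linarith
    rw [dirichletMin]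
    exact le_trans (csInf_le (hbdd n) ⟨x, rfl⟩) h4
  -- third bullet
  have hthird : ∀ n : ℕ, 1 ≤ n →
      |dirichletMin n / (n : ℝ) - 2 * c₀| ≤ (2 * (n₀ : ℝ) + 6) / (n : ℝ) := by
    intro n hn
    have hnpos : (0:ℝ) < (n : ℝ) := by exact_mod_cast hn
    have habs : |dirichletMin n - 2 * (n : ℝ) * c₀| ≤ 2 * (n₀ : ℝ) + 6 := by
      rw [abs_le]
      constructor
      · have := hmlow n
        have hn₀0 : (0:ℝ) ≤ (n₀ : ℝ) := Nat.cast_nonneg _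
        linarith
      · rcases le_or_gt n₀ n with h | h
        · have := hmup n h hn
          have hn₀0 : (0:ℝ) ≤ (n₀ : ℝ) := Nat.cast_nonneg _
          linarith
        · have h1 := hmpi n
          have h2 : (n : ℝ) ≤ (n₀ : ℝ) := by exact_mod_cast le_of_lt h
          have h3 : 2 * (n : ℝ) * c₀ ≥ -(2 * (n₀ : ℝ)) := by nlinarith
          linarith
    have heq2 : dirichletMin n / (n : ℝ) - 2 * c₀
        = (dirichletMin n - 2 * (n : ℝ) * c₀) / (n : ℝ) := by
      field_simp
    rw [heq2, abs_div, abs_of_pos hnpos, div_le_div_iff₀ hnpos hnpos]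
    nlinarith [habs]
  refine ⟨dk_im, ⟨5, fun n _ x => hlow n x⟩, ⟨2 * (n₀ : ℝ) + 6, hthird⟩, ?_⟩
  -- limit
  have hzero : Tendsto (fun n : ℕ => dirichletMin n / (n : ℝ) - 2 * c₀) atTop (𝓝 0) := by
    apply squeeze_zero_norm' (a := fun n : ℕ => (2 * (n₀ : ℝ) + 6) / (n : ℝ))
    · filter_upwards [eventually_ge_atTop 1] with n hn
      simpa [Real.norm_eq_abs] using hthird n hn
    · exact tendsto_const_div_atTop_nhds_zero_nat _
  have := hzero.add (tendsto_const_nhds (x := 2 * c₀))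
  simpa using this
end

section
/- Let g : ℝ → ℝ be continuous, even, nonnegative, integrable, with \hat{g} supported in [-1,1], \hat{g} continuous, and suppose min_{0 ≤ α ≤ 1} (\hat{g}(α) + \hat{g}(1-α)) = 1. Then for every integer N ≥ 1 and every α ∈ [0, N-1], the sum ∑_{j=1}^{N} \hat{g}(α - (j-1)) equals \hat{g}({α}) + \hat{g}(1 - {α}) and hence is at least 1, where {α} denotes the fractional part of α. -/
open Real MeasureTheory Set

/-- Let `g` be continuous, even, nonnegative, integrable, with Fourier transform `gh`
real-valued, continuous, supported in `[-1,1]`, and normalized so that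
`min_{0 ≤ α ≤ 1} (gh(α) + gh(1-α)) = 1`. Then for every `N ≥ 1` and every
`α ∈ [0, N-1]`, `∑_{j=1}^{N} gh(α - (j-1)) = gh({α}) + gh(1 - {α}) ≥ 1`. -/
theorem stmt_5 (g gh : ℝ → ℝ)
    (hcont : Continuous g) (heven : ∀ x, g (-x) = g x) (hnonneg : ∀ x, 0 ≤ g x)
    (hint : Integrable g)
    (hFT : ∀ y : ℝ, FourierTransform.fourier (fun x => (g x : ℂ)) y = (gh y : ℂ))
    (hghcont : Continuous gh)
    (hsupp : ∀ y : ℝ, 1 < |y| → gh y = 0)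
    (hmin1 : ∀ α ∈ Set.Icc (0:ℝ) 1, 1 ≤ gh α + gh (1 - α))
    (hmin2 : ∃ α ∈ Set.Icc (0:ℝ) 1, gh α + gh (1 - α) = 1) :
    ∀ (N : ℕ), 1 ≤ N → ∀ α ∈ Set.Icc (0:ℝ) ((N : ℝ) - 1),
      (∑ j ∈ Finset.Icc 1 N, gh (α - ((j : ℝ) - 1)))
        = gh (Int.fract α) + gh (1 - Int.fract α) ∧
      1 ≤ ∑ j ∈ Finset.Icc 1 N, gh (α - ((j : ℝ) - 1)) := by
  -- gh is even
  have hgheven : ∀ y : ℝ, gh (-y) = gh y := by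
    intro y
    have h1 := hFT y
    have h2 := hFT (-y)
    have key : FourierTransform.fourier (fun x => (g x : ℂ)) (-y)
        = FourierTransform.fourier (fun x => (g x : ℂ)) y := by
      rw [Real.fourier_real_eq, Real.fourier_real_eq]
      rw [← MeasureTheory.integral_neg_eq_self
        (fun v => Real.fourierChar (-(v * -y)) • ((g v : ℂ))) volume]
      congr 1
      ext v
      rw [heven]
      ring_nf
    rw [h1, h2] at key
    exact_mod_cast key
  -- gh vanishes for |y| ≥ 1
  have hgh1 : gh 1 = 0 := by
    have hlim : Filter.Tendsto (fun n : ℕ => gh (1 + 1 / (n + 1))) Filter.atTop (nhds (gh 1)) := by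
      have h : Filter.Tendsto (fun n : ℕ => (1 : ℝ) + 1 / (n + 1)) Filter.atTop (nhds 1) := by
        have := tendsto_one_div_add_atTop_nhds_zero_nat (𝕜 := ℝ)
        simpa using (tendsto_const_nhds (x := (1:ℝ)).add this)
      exact (hghcont.tendsto 1).comp h
    have hz : (fun n : ℕ => gh (1 + 1 / (n + 1))) = fun _ => (0 : ℝ) := by
      ext n
      apply hsupp
      have h0 : (0:ℝ) < 1 / (n + 1) := by positivity
      rw [abs_of_pos (by linarith)]
      linarith
    rw [hz] at hlim
    exact tendsto_nhds_unique hlim tendsto_const_nhds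
  have hsupp' : ∀ y : ℝ, 1 ≤ |y| → gh y = 0 := by
    intro y hy
    rcases lt_or_eq_of_le hy with h | h
    · exact hsupp y h
    · rcases abs_eq (by norm_num : (0:ℝ) ≤ 1) |>.mp h.symm with h' | h'
      · rw [h', hgh1]
      · rw [h', ← hgheven]; simpa using hgh1
  intro N hN α hα
  obtain ⟨hα0, hαN⟩ := hα
  set k : ℤ := ⌊α⌋ with hk
  have hk0 : 0 ≤ k := Int.floor_nonneg.mpr hα0
  set m : ℕ := k.toNat with hm
  have hmk : (m : ℝ) = (k : ℝ) := by exact_mod_cast congrArg Int.cast (Int.toNat_of_nonneg hk0)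
  have hfr : Int.fract α = α - m := by rw [Int.fract, hmk]
  have hf0 : 0 ≤ Int.fract α := Int.fract_nonneg α
  have hf1 : Int.fract α < 1 := Int.fract_lt_one α
  have hmα : (m : ℝ) ≤ α := by rw [hmk]; exact Int.floor_le α
  have hαm : α < m + 1 := by rw [hmk]; exact Int.lt_floor_add_one α
  -- main equality
  have main : (∑ j ∈ Finset.Icc 1 N, gh (α - ((j : ℝ) - 1)))
      = gh (Int.fract α) + gh (1 - Int.fract α) := by
    rcases eq_or_lt_of_le hf0 with hfz | hfp
    · -- fractional part zero: α = m
      have hαeq : α = m := by rw [hfr] at hfz; linarith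
      have hmN : m + 1 ≤ N := by
        have : (m : ℝ) ≤ (N : ℝ) - 1 := by rw [← hαeq]; exact hαN
        have : (m : ℝ) + 1 ≤ (N : ℝ) := by linarith
        exact_mod_cast this
      rw [Finset.sum_eq_single_of_mem (m + 1)
        (Finset.mem_Icc.mpr ⟨Nat.le_add_left 1 m, hmN⟩)]
      · rw [← hfz, hαeq, sub_zero, hgh1, add_zero]
        push_cast
        ring_nf
      · intro b hb hbne
        rw [Finset.mem_Icc] at hb
        apply hsupp'
        rw [hαeq, le_abs]
        rcases lt_or_gt_of_ne hbne with h | h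
        · left
          have : b ≤ m := by omega
          have : (b : ℝ) ≤ m := by exact_mod_cast this
          linarith
        · right
          have : m + 2 ≤ b := by omega
          have : (m : ℝ) + 2 ≤ b := by exact_mod_cast this
          linarith
    · -- fractional part positive
      have hmN : m + 2 ≤ N := by
        have h1 : (m : ℝ) < α := by rw [hfr] at hfp; linarith
        have h2 : (m : ℝ) < (N : ℝ) - 1 := lt_of_lt_of_le h1 hαN
        have : (m : ℝ) + 1 < (N : ℝ) := by linarith
        have : m + 1 < N := by exact_mod_cast this
        omega
      have hsub : ({m + 1, m + 2} : Finset ℕ) ⊆ Finset.Icc 1 N := by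
        intro x hx
        simp only [Finset.mem_insert, Finset.mem_singleton] at hx
        rcases hx with rfl | rfl <;> exact Finset.mem_Icc.mpr ⟨by omega, by omega⟩
      rw [← Finset.sum_subset hsub]
      · rw [Finset.sum_pair (by omega)]
        have e1 : α - (((m + 1 : ℕ) : ℝ) - 1) = Int.fract α := by rw [hfr]; push_cast; ring
        have e2 : α - (((m + 2 : ℕ) : ℝ) - 1) = -(1 - Int.fract α) := by rw [hfr]; push_cast; ring
        rw [e1, e2, hgheven]
      · intro b hb hbne
        rw [Finset.mem_Icc] at hb
        simp only [Finset.mem_insert, Finset.mem_singleton, not_or] at hbne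
        apply hsupp'
        rw [le_abs]
        rcases Nat.lt_or_ge b (m + 1) with h | h
        · left
          have : (b : ℝ) ≤ m := by exact_mod_cast Nat.lt_succ_iff.mp h
          linarith
        · right
          have : m + 3 ≤ b := by omega
          have : (m : ℝ) + 3 ≤ b := by exact_mod_cast this
          have : α < m + 1 := hαm
          linarith
  refine ⟨main, ?_⟩
  rw [main]
  exact hmin1 _ ⟨hf0, hf1.le⟩
end

section
/- Define for Δ ∈ [1,2] the cubic polynomial r_Δ(x) = (Δ²/12)x³ - (Δ/2)x² + (1-Δ)x + Δ/2 - 1/(3Δ). Then for every Δ ∈ [4/3, 2], r_Δ has a unique root in the open interval (0,1), and this root lies in (2/Δ - 1, 1); in particular r_Δ(2/Δ - 1) > 0 and r_Δ(1) < 0. -/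
open Real Set

/-- For `Δ ∈ [4/3, 2]`, the cubic `r_Δ(x) = (Δ²/12)x³ - (Δ/2)x² + (1-Δ)x + Δ/2 - 1/(3Δ)`
has a unique root in `(0,1)`; this root lies in `(2/Δ - 1, 1)`; in particular
`r_Δ(2/Δ - 1) > 0` and `r_Δ(1) < 0`. -/
theorem stmt_9 (Δ : ℝ) (hΔ : Δ ∈ Set.Icc (4/3 : ℝ) 2) :
    (∃! x : ℝ, x ∈ Set.Ioo (0:ℝ) 1 ∧
      Δ ^ 2 / 12 * x ^ 3 - Δ / 2 * x ^ 2 + (1 - Δ) * x + Δ / 2 - 1 / (3 * Δ) = 0) ∧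
    (∀ x : ℝ, x ∈ Set.Ioo (0:ℝ) 1 →
      Δ ^ 2 / 12 * x ^ 3 - Δ / 2 * x ^ 2 + (1 - Δ) * x + Δ / 2 - 1 / (3 * Δ) = 0 →
      x ∈ Set.Ioo (2 / Δ - 1) 1) ∧
    0 < Δ ^ 2 / 12 * (2 / Δ - 1) ^ 3 - Δ / 2 * (2 / Δ - 1) ^ 2
        + (1 - Δ) * (2 / Δ - 1) + Δ / 2 - 1 / (3 * Δ) ∧
    Δ ^ 2 / 12 * 1 ^ 3 - Δ / 2 * 1 ^ 2 + (1 - Δ) * 1 + Δ / 2 - 1 / (3 * Δ) < 0 := by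
  obtain ⟨h1, h2⟩ := hΔ
  have hΔ0 : (0:ℝ) < Δ := by linarith
  have hcont : Continuous (fun x : ℝ =>
      Δ ^ 2 / 12 * x ^ 3 - Δ / 2 * x ^ 2 + (1 - Δ) * x + Δ / 2 - 1 / (3 * Δ)) := by
    fun_prop
  have hupos : 0 < 1/(3*Δ) := by positivity
  have hu : (3*Δ) * (1/(3*Δ)) = 1 := by field_simp
  -- f 1 < 0
  have hf1 : Δ ^ 2 / 12 * (1:ℝ) ^ 3 - Δ / 2 * (1:ℝ) ^ 2 + (1 - Δ) * 1 + Δ / 2 - 1 / (3 * Δ) < 0 := by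
    nlinarith [hu, hupos, mul_nonneg (sub_nonneg.mpr h2) hupos.le,
      mul_nonneg (sub_nonneg.mpr h1) (sub_nonneg.mpr h2)]
  have ha0 : 0 ≤ 2/Δ - 1 := by
    have : 1 ≤ 2/Δ := (one_le_div hΔ0).mpr h2
    linarith
  have ha1 : 2/Δ - 1 < 1 := by
    have : 2/Δ < 2 := by rw [div_lt_iff₀ hΔ0]; nlinarith
    linarith
  -- f (2/Δ - 1) > 0
  have hfa : 0 < Δ ^ 2 / 12 * (2 / Δ - 1) ^ 3 - Δ / 2 * (2 / Δ - 1) ^ 2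
      + (1 - Δ) * (2 / Δ - 1) + Δ / 2 - 1 / (3 * Δ) := by
    have key : Δ ^ 2 / 12 * (2 / Δ - 1) ^ 3 - Δ / 2 * (2 / Δ - 1) ^ 2
        + (1 - Δ) * (2 / Δ - 1) + Δ / 2 - 1 / (3 * Δ)
        = (-Δ^3 + 18*Δ^2 - 24*Δ + 4)/(12*Δ) := by
      field_simp
      ring
    rw [key]
    apply div_pos _ (by linarith)
    nlinarith [mul_nonneg (sub_nonneg.mpr h1) (sub_nonneg.mpr h2),
      mul_nonneg (mul_nonneg (sub_nonneg.mpr h1) (sub_nonneg.mpr h2)) (sub_nonneg.mpr h2)]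
  -- strict antitonicity on [0,1]
  have hanti : ∀ x y : ℝ, 0 ≤ x → y ≤ 1 → x < y →
      Δ ^ 2 / 12 * y ^ 3 - Δ / 2 * y ^ 2 + (1 - Δ) * y + Δ / 2 - 1 / (3 * Δ) <
      Δ ^ 2 / 12 * x ^ 3 - Δ / 2 * x ^ 2 + (1 - Δ) * x + Δ / 2 - 1 / (3 * Δ) := by
    intro x y hx hy hxy
    have hx1 : x ≤ 1 := by linarith
    have hy0 : 0 ≤ y := by linarith
    have hneg : Δ^2/12*(x^2+x*y+y^2) - Δ/2*(x+y) + (1-Δ) < 0 := by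
      nlinarith [mul_nonneg (mul_nonneg hΔ0.le hx) (sub_nonneg.mpr (show Δ*x ≤ 2 by nlinarith)),
        mul_nonneg (mul_nonneg hΔ0.le hy0) (sub_nonneg.mpr (show Δ*y ≤ 2 by nlinarith)),
        mul_nonneg hx hy0, mul_nonneg (sub_nonneg.mpr h1) (sub_nonneg.mpr h2),
        mul_nonneg (sub_nonneg.mpr hx1) (sub_nonneg.mpr hy),
        sq_nonneg (x - y), sq_nonneg (x + y)]
    nlinarith [mul_pos (sub_pos.mpr hxy) (neg_pos.mpr hneg)]
  -- existence via IVT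
  obtain ⟨c, hcmem, hfc⟩ :=
    intermediate_value_Ioo' (le_of_lt ha1) hcont.continuousOn (Set.mem_Ioo.mpr ⟨hf1, hfa⟩)
  obtain ⟨hca, hc1⟩ := hcmem
  have hfc : Δ ^ 2 / 12 * c ^ 3 - Δ / 2 * c ^ 2 + (1 - Δ) * c + Δ / 2 - 1 / (3 * Δ) = 0 := hfc
  have hc0 : 0 < c := lt_of_le_of_lt ha0 hca
  refine ⟨⟨c, ⟨⟨hc0, hc1⟩, hfc⟩, ?_⟩, ?_, hfa, hf1⟩
  · rintro y ⟨⟨hy0, hy1⟩, hy⟩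
    by_contra hne
    rcases lt_or_gt_of_ne hne with h | h
    · have := hanti y c hy0.le hc1.le h
      rw [hfc, hy] at this; exact lt_irrefl 0 this
    · have := hanti c y hc0.le hy1.le h
      rw [hfc, hy] at this; exact lt_irrefl 0 this
  · rintro x ⟨hx0, hx1⟩ hroot
    refine ⟨?_, hx1⟩
    by_contra hle
    push_neg at hle
    rcases eq_or_lt_of_le hle with heq | hlt
    · rw [heq] at hroot; rw [hroot] at hfa; exact lt_irrefl 0 hfa
    · have := hanti x (2/Δ - 1) hx0.le (by linarith) hlt
      rw [hroot] at this
      linarith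
end

section
/- For ℓ ≥ 2, define A(ℓ) = (11(ℓ-2)/12) + (1/2){ℓ/2}² - (5/6){ℓ/2} + 1/3 + (1/6){ℓ/2}(-{ℓ/2}² + 6{ℓ/2} - 3)_+ and B(ℓ) = ℓ/2 - 2/(3ℓ). Then there exists ℓ₁ ∈ (3.6, 3.61) such that B(ℓ) ≥ A(ℓ) for 2 ≤ ℓ ≤ ℓ₁ and A(ℓ) ≥ B(ℓ) for ℓ ≥ ℓ₁. -/
open Real Set

/-- The two competing lower bounds for `ℓ ≥ 2`. -/
noncomputable def Afun (ℓ : ℝ) : ℝ :=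
  11 * (ℓ - 2) / 12 + (1/2) * (Int.fract (ℓ/2)) ^ 2 - (5/6) * Int.fract (ℓ/2)
    + 1/3 + (1/6) * Int.fract (ℓ/2)
        * max (-(Int.fract (ℓ/2)) ^ 2 + 6 * Int.fract (ℓ/2) - 3) 0

noncomputable def Bfun (ℓ : ℝ) : ℝ := ℓ / 2 - 2 / (3 * ℓ)

lemma fract_half (ℓ : ℝ) (h2 : 2 ≤ ℓ) (h4 : ℓ < 4) : Int.fract (ℓ/2) = ℓ/2 - 1 := by
  have hf : ⌊ℓ/2⌋ = 1 := by
    rw [Int.floor_eq_iff]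
    constructor <;> push_cast <;> linarith
  rw [Int.fract, hf]
  norm_num

lemma gle (f f₀ : ℝ) (h0 : 0 ≤ f) (h1 : f ≤ f₀) (h2 : 0.804 ≤ f₀) (h3 : f₀ ≤ 0.8049)
    (hg : -f₀^4 + 8*f₀^3 + 6*f₀^2 - 7*f₀ - 2 = 0) :
    -f^4 + 8*f^3 + 6*f^2 - 7*f - 2 ≤ 0 := by
  have hb : 0 ≤ -(f^3+f^2*f₀+f*f₀^2+f₀^3) + 8*(f^2+f*f₀+f₀^2) + 6*(f+f₀) - 7 := by
    nlinarith [sq_nonneg f, sq_nonneg (f*f₀), mul_nonneg h0 (le_trans h0 h1)]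
  nlinarith [mul_nonneg (sub_nonneg.2 h1) hb]

lemma gge (f f₀ : ℝ) (h1 : f₀ ≤ f) (h4 : f < 1) (h2 : 0.804 ≤ f₀) (h3 : f₀ ≤ 0.8049)
    (hg : -f₀^4 + 8*f₀^3 + 6*f₀^2 - 7*f₀ - 2 = 0) :
    0 ≤ -f^4 + 8*f^3 + 6*f^2 - 7*f - 2 := by
  have hb : 0 ≤ -(f^3+f^2*f₀+f*f₀^2+f₀^3) + 8*(f^2+f*f₀+f₀^2) + 6*(f+f₀) - 7 := by
    nlinarith [mul_nonneg (show (0:ℝ) ≤ f₀ by linarith) (show (0:ℝ) ≤ f by linarith)]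
  nlinarith [mul_nonneg (sub_nonneg.2 h1) hb]

/-- There is a crossover point `ℓ₁ ∈ (3.6, 3.61)`: `B ≥ A` on `[2, ℓ₁]` and `A ≥ B` on
`[ℓ₁, ∞)`. -/
theorem stmt_12 :
    ∃ ℓ₁ ∈ Set.Ioo (3.6 : ℝ) 3.61,
      (∀ ℓ : ℝ, 2 ≤ ℓ → ℓ ≤ ℓ₁ → Afun ℓ ≤ Bfun ℓ) ∧
      (∀ ℓ : ℝ, ℓ₁ ≤ ℓ → Bfun ℓ ≤ Afun ℓ) := by
  obtain ⟨f₀, hmem, hg⟩ : ∃ f₀ ∈ Set.Icc (0.804:ℝ) 0.8049,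
      -f₀^4 + 8*f₀^3 + 6*f₀^2 - 7*f₀ - 2 = 0 := by
    have hc : ContinuousOn (fun f : ℝ => -f^4 + 8*f^3 + 6*f^2 - 7*f - 2)
        (Set.Icc (0.804:ℝ) 0.8049) := by fun_prop
    have h := intermediate_value_Icc (by norm_num : (0.804:ℝ) ≤ 0.8049) hc
    have h0 : (0:ℝ) ∈ Set.Icc (-(0.804:ℝ)^4 + 8*0.804^3 + 6*0.804^2 - 7*0.804 - 2)
        (-(0.8049:ℝ)^4 + 8*0.8049^3 + 6*0.8049^2 - 7*0.8049 - 2) := by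
      constructor <;> norm_num
    obtain ⟨f₀, hmem, hf₀⟩ := h h0
    exact ⟨f₀, hmem, hf₀⟩
  obtain ⟨hf₀l, hf₀u⟩ := hmem
  refine ⟨2 + 2*f₀, ⟨by norm_num; linarith, by norm_num; linarith⟩, ?_, ?_⟩
  · -- A ≤ B on [2, ℓ₁]
    intro ℓ h2 hle
    have h4 : ℓ < 4 := by linarith
    have hfr := fract_half ℓ h2 h4
    obtain ⟨f, rfl⟩ : ∃ f, ℓ = 2*f + 2 := ⟨ℓ/2 - 1, by ring⟩
    have hfr' : Int.fract ((2*f+2)/2) = f := by rw [hfr]; ring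
    have hf0 : 0 ≤ f := by linarith
    have hffu : f ≤ f₀ := by linarith
    have hℓpos : (0:ℝ) < 3*(2*f+2) := by linarith
    rw [Afun, Bfun, hfr']
    rw [show (2*f+2)/2 - 2/(3*(2*f+2)) =
        (2*f+2)/2 - 2/(3*(2*f+2)) from rfl]
    have key : 2 / (3*(2*f+2)) ≤ (2*f+2)/2 -
        (11 * (2*f+2 - 2) / 12 + (1/2) * f ^ 2 - (5/6) * f + 1/3
          + (1/6) * f * max (-f ^ 2 + 6 * f - 3) 0) := by
      rw [div_le_iff₀ hℓpos]
      rcases le_or_gt (-f ^ 2 + 6 * f - 3) 0 with hm | hm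
      · rw [max_eq_right hm]
        nlinarith [sq_nonneg f, sq_nonneg (f-1)]
      · rw [max_eq_left hm.le]
        have := gle f f₀ hf0 hffu hf₀l hf₀u hg
        nlinarith [this]
    linarith [key]
  · -- B ≤ A on [ℓ₁, ∞)
    intro ℓ hge
    have hℓ2 : (2:ℝ) ≤ ℓ := by linarith
    rcases lt_or_ge ℓ 4 with h4 | h4
    · have hfr := fract_half ℓ hℓ2 h4
      obtain ⟨f, rfl⟩ : ∃ f, ℓ = 2*f + 2 := ⟨ℓ/2 - 1, by ring⟩
      have hfr' : Int.fract ((2*f+2)/2) = f := by rw [hfr]; ring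
      have hff₀ : f₀ ≤ f := by linarith
      have hf1 : f < 1 := by linarith
      have hℓpos : (0:ℝ) < 3*(2*f+2) := by linarith
      rw [Afun, Bfun, hfr']
      have hm : (0:ℝ) ≤ -f ^ 2 + 6 * f - 3 := by nlinarith
      rw [max_eq_left hm]
      have key : 2 / (3*(2*f+2)) ≥ (2*f+2)/2 -
          (11 * (2*f+2 - 2) / 12 + (1/2) * f ^ 2 - (5/6) * f + 1/3
            + (1/6) * f * (-f ^ 2 + 6 * f - 3)) := by
        rw [ge_iff_le, le_div_iff₀ hℓpos]
        have := gge f f₀ hff₀ hf1 hf₀l hf₀u hg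
        nlinarith [this]
      linarith [key]
    · -- ℓ ≥ 4
      set f := Int.fract (ℓ/2) with hf
      have hf0 : 0 ≤ f := Int.fract_nonneg _
      have hf1 : f < 1 := Int.fract_lt_one _
      have hn : (2:ℝ) ≤ (⌊ℓ/2⌋ : ℝ) := by
        have : (2:ℤ) ≤ ⌊ℓ/2⌋ := by
          rw [Int.le_floor]; push_cast; linarith
        exact_mod_cast this
      have hsplit : ℓ/2 = (⌊ℓ/2⌋ : ℝ) + f := by rw [hf, Int.fract]; ring
      have hM : (0:ℝ) ≤ max (-f ^ 2 + 6 * f - 3) 0 := le_max_right _ _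
      have hBle : Bfun ℓ ≤ ℓ/2 := by
        rw [Bfun]
        have : 0 < 2/(3*ℓ) := by positivity
        linarith
      have hAge : ℓ/2 ≤ Afun ℓ := by
        rw [Afun, ← hf]
        nlinarith [mul_nonneg hf0 hM, sq_nonneg f]
      linarith
end

section
/- Let Δ ∈ [1,2], let n ≥ 0 be an integer and δ > 0 satisfy Δ(n-1) + 2δ = ℓ. Define N = n+2 triangle functions: \hat{g}_j(α) = (1-|α|/Δ)_+ for 2 ≤ j ≤ n+1, and \hat{g}_1(α) = \hat{g}_{n+2}(α) = (δ/Δ)(1-|α|/δ)_+, translated by ξ₁ = 0, ξ_j = δ + Δ(j-2) for 2 ≤ j ≤ n+1, and ξ_{n+2} = ℓ. Then for all α ∈ [0, ℓ], ∑_{j=1}^{N} \hat{g}_j(α - ξ_j) ≥ 1. -/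
open Real Set

/-- Majorant construction: `n+2` translated triangles (big triangles of base `2Δ` and
height `1`, plus two small end triangles of base `2δ` and height `δ/Δ`) majorize the
indicator of `[0, ℓ]` on `[0, ℓ]`, where `Δ(n-1) + 2δ = ℓ`. -/
theorem stmt_14 (Δ δ ℓ : ℝ) (n : ℕ) (hΔ : Δ ∈ Set.Icc (1:ℝ) 2) (hδ : 0 < δ)
    (hℓ : Δ * ((n : ℝ) - 1) + 2 * δ = ℓ) :
    ∀ α ∈ Set.Icc (0:ℝ) ℓ,
      1 ≤ ∑ j ∈ Finset.Icc 1 (n + 2),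
        (if j = 1 ∨ j = n + 2 then
          (δ / Δ) * max (1 - |α - (if j = 1 then 0 else ℓ)| / δ) 0
        else
          max (1 - |α - (δ + Δ * ((j : ℝ) - 2))| / Δ) 0) := by
  obtain ⟨hΔ1, hΔ2⟩ := hΔ
  have hΔ0 : (0:ℝ) < Δ := by linarith
  rintro α ⟨hα0, hαℓ⟩
  set f : ℕ → ℝ := fun j =>
    if j = 1 ∨ j = n + 2 then
      (δ / Δ) * max (1 - |α - (if j = 1 then 0 else ℓ)| / δ) 0
    else
      max (1 - |α - (δ + Δ * ((j : ℝ) - 2))| / Δ) 0 with hf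
  have hnonneg : ∀ j ∈ Finset.Icc 1 (n+2), 0 ≤ f j := by
    intro j _
    simp only [hf]
    split
    · positivity
    · positivity
  have key : ∀ j1 j2 : ℕ, j1 ≠ j2 → j1 ∈ Finset.Icc 1 (n+2) → j2 ∈ Finset.Icc 1 (n+2) →
      1 ≤ f j1 + f j2 → 1 ≤ ∑ j ∈ Finset.Icc 1 (n + 2), f j := by
    intro j1 j2 hne h1 h2 hsum
    calc 1 ≤ f j1 + f j2 := hsum
      _ = ∑ j ∈ ({j1, j2} : Finset ℕ), f j := (Finset.sum_pair hne).symm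
      _ ≤ ∑ j ∈ Finset.Icc 1 (n+2), f j :=
        Finset.sum_le_sum_of_subset_of_nonneg
          (by simp [Finset.insert_subset_iff, h1, h2])
          (fun i hi _ => hnonneg i hi)
  rcases Nat.eq_zero_or_pos n with hn0 | hn1
  · -- n = 0 : two small triangles only
    subst hn0
    apply key 1 2 (by norm_num) (by rw [Finset.mem_Icc]; omega) (by rw [Finset.mem_Icc]; omega)
    have hf1 : f 1 = (δ / Δ) * max (1 - |α - 0| / δ) 0 := by simp [hf]
    have hf2 : f 2 = (δ / Δ) * max (1 - |α - ℓ| / δ) 0 := by simp [hf]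
    have hL : ℓ = 2 * δ - Δ := by push_cast at hℓ; linarith
    have ha1 : |α - 0| = α := by rw [sub_zero, abs_of_nonneg hα0]
    have ha2 : |α - ℓ| = ℓ - α := by rw [abs_of_nonpos (by linarith)]; ring
    rw [hf1, hf2, ha1, ha2]
    have h1 : (δ / Δ) * (1 - α / δ) ≤ (δ / Δ) * max (1 - α / δ) 0 :=
      mul_le_mul_of_nonneg_left (le_max_left _ _) (by positivity)
    have h2 : (δ / Δ) * (1 - (ℓ - α) / δ) ≤ (δ / Δ) * max (1 - (ℓ - α) / δ) 0 :=
      mul_le_mul_of_nonneg_left (le_max_left _ _) (by positivity)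
    have e : (δ / Δ) * (1 - α / δ) + (δ / Δ) * (1 - (ℓ - α) / δ) = 1 := by
      field_simp
      nlinarith [hL]
    linarith
  · -- n ≥ 1
    rcases le_or_gt α δ with hαδ | hαδ
    · -- left end: j = 1 and j = 2
      apply key 1 2 (by norm_num) (by rw [Finset.mem_Icc]; omega) (by rw [Finset.mem_Icc]; omega)
      have hf1 : f 1 = (δ / Δ) * max (1 - |α - 0| / δ) 0 := by simp [hf]
      have h2ne : ¬ (2 = 1 ∨ 2 = n + 2) := by omega
      have hf2 : f 2 = max (1 - |α - (δ + Δ * ((2 : ℝ) - 2))| / Δ) 0 := by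
        simp only [hf, h2ne, if_false]
        norm_num
      have ha1 : |α - 0| = α := by rw [sub_zero, abs_of_nonneg hα0]
      have ha2 : |α - (δ + Δ * ((2:ℝ) - 2))| = δ - α := by
        rw [show δ + Δ * ((2:ℝ) - 2) = δ by ring, abs_of_nonpos (by linarith)]; ring
      rw [hf1, hf2, ha1, ha2]
      have h1 : (δ / Δ) * (1 - α / δ) ≤ (δ / Δ) * max (1 - α / δ) 0 :=
        mul_le_mul_of_nonneg_left (le_max_left _ _) (by positivity)
      have h2 : 1 - (δ - α) / Δ ≤ max (1 - (δ - α) / Δ) 0 := le_max_left _ _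
      have e : (δ / Δ) * (1 - α / δ) + (1 - (δ - α) / Δ) = 1 := by
        field_simp
        ring
      linarith
    · rcases le_or_gt (ℓ - δ) α with hαr | hαr
      · -- right end: j = n+1 and j = n+2
        apply key (n+1) (n+2) (by omega) (by rw [Finset.mem_Icc]; omega) (by rw [Finset.mem_Icc]; omega)
        have h1ne : ¬ (n + 1 = 1 ∨ n + 1 = n + 2) := by omega
        have hf1 : f (n+1) = max (1 - |α - (δ + Δ * (((n:ℝ) + 1) - 2))| / Δ) 0 := by
          simp only [hf, h1ne, if_false]
          push_cast
          ring_nf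
        have hf2 : f (n+2) = (δ / Δ) * max (1 - |α - ℓ| / δ) 0 := by
          have : (n + 2 = 1 ∨ n + 2 = n + 2) := Or.inr rfl
          simp only [hf, this, if_true]
          have : ¬ (n + 2 = 1) := by omega
          simp [this]
        have hc : δ + Δ * (((n:ℝ) + 1) - 2) = ℓ - δ := by linarith
        have ha1 : |α - (δ + Δ * (((n:ℝ) + 1) - 2))| = α - (ℓ - δ) := by
          rw [hc, abs_of_nonneg (by linarith)]
        have ha2 : |α - ℓ| = ℓ - α := by rw [abs_of_nonpos (by linarith)]; ring
        rw [hf1, hf2, ha1, ha2]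
        have h1 : 1 - (α - (ℓ - δ)) / Δ ≤ max (1 - (α - (ℓ - δ)) / Δ) 0 := le_max_left _ _
        have h2 : (δ / Δ) * (1 - (ℓ - α) / δ) ≤ (δ / Δ) * max (1 - (ℓ - α) / δ) 0 :=
          mul_le_mul_of_nonneg_left (le_max_left _ _) (by positivity)
        have e : (1 - (α - (ℓ - δ)) / Δ) + (δ / Δ) * (1 - (ℓ - α) / δ) = 1 := by
          field_simp
          ring
        linarith
      · -- middle: δ < α < ℓ - δ, use floor
        have hn2 : 2 ≤ n := by
          by_contra h
          have : n = 1 := by omega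
          subst this
          push_cast at hℓ
          linarith
        set k : ℕ := (⌊(α - δ) / Δ⌋).toNat with hk
        have hfl0 : (0:ℤ) ≤ ⌊(α - δ) / Δ⌋ := by
          apply Int.floor_nonneg.mpr
          exact div_nonneg (by linarith) hΔ0.le
        have hkc : ((k:ℝ)) = (⌊(α - δ) / Δ⌋ : ℝ) := by
          rw [hk]
          exact_mod_cast Int.toNat_of_nonneg hfl0
        have hklb : (k:ℝ) ≤ (α - δ) / Δ := by rw [hkc]; exact Int.floor_le _
        have hkub : (α - δ) / Δ < (k:ℝ) + 1 := by rw [hkc]; exact Int.lt_floor_add_one _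
        have hlb : δ + Δ * k ≤ α := by
          have := (le_div_iff₀ hΔ0).mp hklb
          linarith
        have hub : α ≤ δ + Δ * ((k:ℝ) + 1) := by
          have := (div_lt_iff₀ hΔ0).mp hkub
          linarith
        have hkn : k + 2 ≤ n := by
          -- from α < ℓ - δ : Δ * k ≤ α - δ < Δ * (n-1)
          by_contra h
          have hkn' : (n:ℝ) - 1 ≤ (k:ℝ) := by
            have : n ≤ k + 1 := by omega
            have : (n:ℝ) ≤ (k:ℝ) + 1 := by exact_mod_cast this
            linarith
          have : Δ * ((n:ℝ) - 1) ≤ Δ * k := by nlinarith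
          have hαbig : ℓ - δ ≤ α := by nlinarith
          linarith
        apply key (k+2) (k+3) (by omega) (by rw [Finset.mem_Icc]; omega) (by rw [Finset.mem_Icc]; omega)
        have h1ne : ¬ (k + 2 = 1 ∨ k + 2 = n + 2) := by omega
        have h2ne : ¬ (k + 3 = 1 ∨ k + 3 = n + 2) := by omega
        have hf1 : f (k+2) = max (1 - |α - (δ + Δ * (k:ℝ))| / Δ) 0 := by
          simp only [hf, h1ne, if_false]
          push_cast
          ring_nf
        have hf2 : f (k+3) = max (1 - |α - (δ + Δ * ((k:ℝ) + 1))| / Δ) 0 := by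
          simp only [hf, h2ne, if_false]
          push_cast
          ring_nf
        have ha1 : |α - (δ + Δ * (k:ℝ))| = α - (δ + Δ * k) :=
          abs_of_nonneg (by linarith)
        have ha2 : |α - (δ + Δ * ((k:ℝ) + 1))| = δ + Δ * ((k:ℝ) + 1) - α := by
          rw [abs_of_nonpos (by linarith)]; ring
        rw [hf1, hf2, ha1, ha2]
        have h1 : 1 - (α - (δ + Δ * k)) / Δ ≤ max (1 - (α - (δ + Δ * k)) / Δ) 0 :=
          le_max_left _ _
        have h2 : 1 - (δ + Δ * ((k:ℝ) + 1) - α) / Δ ≤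
            max (1 - (δ + Δ * ((k:ℝ) + 1) - α) / Δ) 0 := le_max_left _ _
        have e : (1 - (α - (δ + Δ * k)) / Δ) + (1 - (δ + Δ * ((k:ℝ) + 1) - α) / Δ) = 1 := by
          field_simp
          ring
        linarith
end

section
/- Let Δ ∈ [4/3, 2), ℓ ≥ Δ, n = ⌊ℓ/Δ⌋ - 1, δ₁ = (Δ/2)(1 + {ℓ/Δ}), δ₂ = (Δ/2){ℓ/Δ}. Consider \hat{g}_j(α) = (1-|α|/Δ)_+ for 1 ≤ j ≤ n translated by ξ_j = Δj, plus \hat{g}_{n+1}(α) = (δ₁/Δ)(1-|α|/δ₁)_+ translated by ξ_{n+1} = Δn + δ₁, plus (if δ₂ > 0) \hat{g}_{n+2}(α) = (δ₂/Δ)(1-|α|/δ₂)_+ translated by ξ_{n+2} = Δ(n+1) + δ₂. Then ∑_j \hat{g}_j(α - ξ_j) ≤ χ_{[0,ℓ]}(α) for all α ∈ ℝ. -/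
open Real Set

-- linear key lemma
lemma Lkey (Δ b d α : ℝ) (hd : 0 ≤ d) (hdΔ : d ≤ Δ) :
    max (d - |α - (b + d)|) 0 ≤
      min (max (α - b) 0) Δ - min (max (α - b - Δ) 0) Δ := by
  rcases abs_cases (α - (b + d)) with ⟨h1, h2⟩ | ⟨h1, h2⟩ <;>
    rw [h1] <;>
    rw [max_def, max_def, max_def, min_def, min_def] <;>
    split_ifs <;> linarith

lemma term_bound (Δ b d α : ℝ) (hΔ : 0 < Δ) (hd : 0 ≤ d) (hdΔ : d ≤ Δ) :
    d / Δ * max (1 - |α - (b + d)| / d) 0 ≤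
      (min (max (α - b) 0) Δ - min (max (α - b - Δ) 0) Δ) / Δ := by
  have hmono : min (max (α - b - Δ) 0) Δ ≤ min (max (α - b) 0) Δ :=
    min_le_min (max_le_max (by linarith) le_rfl) le_rfl
  rcases hd.eq_or_lt with h | h
  · rw [← h]
    simp only [zero_div, zero_mul]
    apply div_nonneg (by linarith) hΔ.le
  · have hiff : (1 - |α - (b + d)| / d ≤ 0) ↔ (d - |α - (b + d)| ≤ 0) := by
      rw [sub_nonpos, sub_nonpos, le_div_iff₀ h, one_mul]
    have e : d / Δ * max (1 - |α - (b + d)| / d) 0 = max (d - |α - (b + d)|) 0 / Δ := by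
      rcases le_or_gt (1 - |α - (b + d)| / d) 0 with h1 | h1
      · rw [max_eq_right h1, max_eq_right (hiff.mp h1), mul_zero, zero_div]
      · rw [max_eq_left h1.le,
          max_eq_left (not_le.mp (fun hc => absurd (hiff.mpr hc) (not_le.mpr h1))).le]
        field_simp
    rw [e]
    exact div_le_div_of_nonneg_right (Lkey Δ b d α hd hdΔ) hΔ.le

/-- Minorant construction: for `Δ ∈ [4/3, 2)`, `ℓ ≥ Δ`, `n = ⌊ℓ/Δ⌋ - 1`,
`δ₁ = (Δ/2)(1 + {ℓ/Δ})`, `δ₂ = (Δ/2){ℓ/Δ}`, the superposition of `n` big triangles,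
one medium triangle and one small triangle is bounded above by the indicator of
`[0, ℓ]` on all of `ℝ`. -/
theorem stmt_15 (Δ ℓ : ℝ) (n : ℕ) (hΔ : Δ ∈ Set.Ico (4/3 : ℝ) 2) (hℓ : Δ ≤ ℓ)
    (hn : (n : ℝ) = (⌊ℓ / Δ⌋ : ℝ) - 1) :
    ∀ α : ℝ,
      (∑ j ∈ Finset.Icc 1 (n + 2),
        (if j = n + 1 then
          ((Δ/2) * (1 + Int.fract (ℓ/Δ)) / Δ)
            * max (1 - |α - (Δ * (n : ℝ) + (Δ/2) * (1 + Int.fract (ℓ/Δ)))|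
                / ((Δ/2) * (1 + Int.fract (ℓ/Δ)))) 0
        else if j = n + 2 then
          ((Δ/2) * Int.fract (ℓ/Δ) / Δ)
            * max (1 - |α - (Δ * ((n : ℝ) + 1) + (Δ/2) * Int.fract (ℓ/Δ))|
                / ((Δ/2) * Int.fract (ℓ/Δ))) 0
        else
          max (1 - |α - Δ * (j : ℝ)| / Δ) 0))
      ≤ (if α ∈ Set.Icc (0:ℝ) ℓ then 1 else 0) := by
  obtain ⟨hΔ1, hΔ2⟩ := hΔ
  have hΔ0 : (0:ℝ) < Δ := by linarith
  intro α
  set F := Int.fract (ℓ / Δ) with hFdef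
  have hF0 : 0 ≤ F := Int.fract_nonneg _
  have hF1 : F < 1 := Int.fract_lt_one _
  have hfl : (⌊ℓ / Δ⌋ : ℝ) + F = ℓ / Δ := Int.floor_add_fract _
  have hℓΔ : ℓ / Δ = (n : ℝ) + 1 + F := by linarith
  have hℓ' : ℓ = Δ * ((n : ℝ) + 1 + F) := by
    rw [← hℓΔ]; field_simp
  set R : ℕ → ℝ := fun j => min (max (α - Δ * ((j : ℝ) - 1)) 0) Δ with hR
  by_cases hα : α ∈ Set.Icc (0:ℝ) ℓ
  · rw [if_pos hα]
    have key : ∀ j ∈ Finset.Icc 1 (n + 2),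
        (if j = n + 1 then
          ((Δ/2) * (1 + F) / Δ)
            * max (1 - |α - (Δ * (n : ℝ) + (Δ/2) * (1 + F))| / ((Δ/2) * (1 + F))) 0
        else if j = n + 2 then
          ((Δ/2) * F / Δ)
            * max (1 - |α - (Δ * ((n : ℝ) + 1) + (Δ/2) * F)| / ((Δ/2) * F)) 0
        else
          max (1 - |α - Δ * (j : ℝ)| / Δ) 0)
          ≤ (R j - R (j + 1)) / Δ := by
      intro j hj
      simp only [Finset.mem_Icc] at hj
      by_cases h1 : j = n + 1
      · subst h1
        rw [if_pos rfl]
        have hb := term_bound Δ (Δ * (n : ℝ)) ((Δ/2) * (1 + F)) α hΔ0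
          (by positivity) (by nlinarith)
        refine hb.trans (le_of_eq ?_)
        simp only [hR]
        push_cast
        ring_nf
      · by_cases h2 : j = n + 2
        · subst h2
          rw [if_neg h1, if_pos rfl]
          have hb := term_bound Δ (Δ * ((n : ℝ) + 1)) ((Δ/2) * F) α hΔ0
            (by positivity) (by nlinarith)
          refine hb.trans (le_of_eq ?_)
          simp only [hR]
          push_cast
          ring_nf
        · rw [if_neg h1, if_neg h2]
          have hb := term_bound Δ (Δ * ((j : ℝ) - 1)) Δ α hΔ0 hΔ0.le le_rfl
          rw [div_self hΔ0.ne', one_mul,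
            show Δ * ((j : ℝ) - 1) + Δ = Δ * (j : ℝ) by ring] at hb
          refine hb.trans (le_of_eq ?_)
          simp only [hR]
          push_cast
          ring_nf
    have tel : ∑ j ∈ Finset.Icc 1 (n + 2), (R j - R (j + 1)) = R 1 - R (n + 3) := by
      rw [show Finset.Icc 1 (n + 2) = Finset.Ico 1 (n + 3) by rw [show n + 3 = n + 2 + 1 from rfl, Finset.Ico_add_one_right_eq_Icc],
        Finset.sum_Ico_eq_sum_range]
      have h := Finset.sum_range_sub' (fun i => R (i + 1)) (n + 2)
      simp only [Nat.add_comm 1]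
      convert h using 2
      rfl
    calc _ ≤ ∑ j ∈ Finset.Icc 1 (n + 2), (R j - R (j + 1)) / Δ :=
          Finset.sum_le_sum key
      _ = (∑ j ∈ Finset.Icc 1 (n + 2), (R j - R (j + 1))) / Δ := by
          rw [Finset.sum_div]
      _ = (R 1 - R (n + 3)) / Δ := by rw [tel]
      _ ≤ 1 := by
          rw [div_le_one hΔ0]
          have h1 : R 1 ≤ Δ := min_le_right _ _
          have h2 : 0 ≤ R (n + 3) := le_min (le_max_right _ _) hΔ0.le
          linarith
  · rw [if_neg hα]
    simp only [Set.mem_Icc, not_and_or, not_le] at hα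
    apply Finset.sum_nonpos
    intro j hj
    simp only [Finset.mem_Icc] at hj
    by_cases h1 : j = n + 1
    · subst h1
      rw [if_pos rfl]
      have hd1 : (0:ℝ) < (Δ/2) * (1 + F) := by nlinarith
      have habs : (Δ/2) * (1 + F) ≤ |α - (Δ * (n : ℝ) + (Δ/2) * (1 + F))| := by
        have hn0 : (0:ℝ) ≤ (n : ℝ) := Nat.cast_nonneg _
        rcases hα with h | h
        · calc (Δ/2) * (1 + F) ≤ -(α - (Δ * (n : ℝ) + (Δ/2) * (1 + F))) := by nlinarith
            _ ≤ |α - (Δ * (n : ℝ) + (Δ/2) * (1 + F))| := neg_le_abs _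
        · calc (Δ/2) * (1 + F) ≤ α - (Δ * (n : ℝ) + (Δ/2) * (1 + F)) := by nlinarith
            _ ≤ |_| := le_abs_self _
      have : max (1 - |α - (Δ * (n : ℝ) + (Δ/2) * (1 + F))| / ((Δ/2) * (1 + F))) 0 = 0 := by
        apply max_eq_right
        rw [sub_nonpos, le_div_iff₀ hd1]
        linarith [habs]
      rw [this, mul_zero]
    · by_cases h2 : j = n + 2
      · subst h2
        rw [if_neg h1, if_pos rfl]
        rcases hF0.eq_or_lt with hF | hF
        · rw [← hF]
          simp
        · have hd1 : (0:ℝ) < (Δ/2) * F := by positivity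
          have habs : (Δ/2) * F ≤ |α - (Δ * ((n : ℝ) + 1) + (Δ/2) * F)| := by
            have hn0 : (0:ℝ) ≤ (n : ℝ) := Nat.cast_nonneg _
            rcases hα with h | h
            · calc (Δ/2) * F ≤ -(α - (Δ * ((n : ℝ) + 1) + (Δ/2) * F)) := by nlinarith
                _ ≤ |α - (Δ * ((n : ℝ) + 1) + (Δ/2) * F)| := neg_le_abs _
            · calc (Δ/2) * F ≤ α - (Δ * ((n : ℝ) + 1) + (Δ/2) * F) := by nlinarith
                _ ≤ |_| := le_abs_self _
          have : max (1 - |α - (Δ * ((n : ℝ) + 1) + (Δ/2) * F)| / ((Δ/2) * F)) 0 = 0 := by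
            apply max_eq_right
            rw [sub_nonpos, le_div_iff₀ hd1]
            linarith [habs]
          rw [this, mul_zero]
      · rw [if_neg h1, if_neg h2]
        have hj1 : (1:ℝ) ≤ (j : ℝ) := by exact_mod_cast hj.1
        have hjn : (j : ℝ) ≤ (n : ℝ) := by
          have : j ≤ n := by omega
          exact_mod_cast this
        have habs : Δ ≤ |α - Δ * (j : ℝ)| := by
          rcases hα with h | h
          · calc Δ ≤ -(α - Δ * (j : ℝ)) := by nlinarith
              _ ≤ |α - Δ * (j : ℝ)| := neg_le_abs _
          · calc Δ ≤ α - Δ * (j : ℝ) := by nlinarith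
              _ ≤ |_| := le_abs_self _
        have : max (1 - |α - Δ * (j : ℝ)| / Δ) 0 = 0 := by
          apply max_eq_right
          rw [sub_nonpos, le_div_iff₀ hΔ0]
          linarith [habs]
        rw [this]
end
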